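/- Under hypotheses (H1)–(H3), for every object X of C there exists a unique k-linear map F_X : Z(X) → Z'(X) satisfying F_X(v_Z(M)) = v_{Z'}(M) for every morphism M : 𝟙 ⟶ X; moreover F_X is a linear isomorphism. -/

import Mathlib

open CategoryTheory MonoidalCategory

universe v u

/-- The distinguished vector `ε_Z(1) ∈ Z(𝟙)` determined by the unit isomorphism
`ε_Z : k ≅ Z(𝟙)` of a (strong) monoidal functor `Z : C ⥤ ModuleCat k`. -/
noncomputable def unitVec {k : Type*} [Field k] {C : Type u} [Category.{v} C]
    [MonoidalCategory C] (Z : C ⥤ ModuleCat k) [Z.Monoidal] : Z.obj (𝟙_ C) :=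
  Functor.LaxMonoidal.ε Z (1 : k)

/-- `v_Z(M) := Z(M)(ε_Z(1)) ∈ Z(X)` for a morphism `M : 𝟙 ⟶ X`. -/
noncomputable def vec {k : Type*} [Field k] {C : Type u} [Category.{v} C]
    [MonoidalCategory C] (Z : C ⥤ ModuleCat k) [Z.Monoidal] {X : C} (M : 𝟙_ C ⟶ X) :
    Z.obj X :=
  Z.map M (unitVec Z)

/-- Under (H1)–(H3), for each object `X` there is a unique linear map
`F_X : Z(X) → Z'(X)` with `F_X (v_Z(M)) = v_{Z'}(M)` for all `M : 𝟙 ⟶ X`; moreover any such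
map is a linear isomorphism (i.e. bijective). -/
theorem exists_unique_component {k : Type*} [Field k] {C : Type u} [Category.{v} C]
    [MonoidalCategory C] (Z Z' : C ⥤ ModuleCat k) [Z.Monoidal] [Z'.Monoidal]
    -- (H1): every object admits a morphism from and a morphism to the unit object
    (H1 : ∀ X : C, Nonempty (𝟙_ C ⟶ X) ∧ Nonempty (X ⟶ 𝟙_ C))
    -- (H2): for every `f : 𝟙 ⟶ 𝟙` the scalars `⟨Z(f)⟩` and `⟨Z'(f)⟩` agree and are nonzero
    (H2 : ∀ f : 𝟙_ C ⟶ 𝟙_ C, ∃ c : k, c ≠ 0 ∧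
      Z.map f (unitVec Z) = c • unitVec Z ∧ Z'.map f (unitVec Z') = c • unitVec Z')
    -- (H3): all state spaces are one-dimensional
    (H3 : ∀ X : C, Module.finrank k (Z.obj X) = 1 ∧ Module.finrank k (Z'.obj X) = 1) :
    ∀ X : C,
      (∃! F : Z.obj X →ₗ[k] Z'.obj X, ∀ M : 𝟙_ C ⟶ X, F (vec Z M) = vec Z' M) ∧
      (∀ F : Z.obj X →ₗ[k] Z'.obj X,
        (∀ M : 𝟙_ C ⟶ X, F (vec Z M) = vec Z' M) → Function.Bijective F) := by
  classical
  intro X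
  obtain ⟨⟨M₀⟩, ⟨N₀⟩⟩ := H1 X
  -- `unitVec` is nonzero
  have huZ : unitVec Z ≠ 0 := by
    intro h
    have h1 : Functor.OplaxMonoidal.η Z (unitVec Z) = (1 : k) := by
      have h0 : (Functor.LaxMonoidal.ε Z ≫ Functor.OplaxMonoidal.η Z) (1 : k)
          = (𝟙 (𝟙_ (ModuleCat k)) : 𝟙_ (ModuleCat k) ⟶ 𝟙_ (ModuleCat k)) (1 : k) := by
        rw [Functor.Monoidal.ε_η]
      rw [ConcreteCategory.comp_apply] at h0
      exact h0.trans rfl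
    rw [h, map_zero] at h1
    exact one_ne_zero h1.symm
  have huZ' : unitVec Z' ≠ 0 := by
    intro h
    have h1 : Functor.OplaxMonoidal.η Z' (unitVec Z') = (1 : k) := by
      have h0 : (Functor.LaxMonoidal.ε Z' ≫ Functor.OplaxMonoidal.η Z') (1 : k)
          = (𝟙 (𝟙_ (ModuleCat k)) : 𝟙_ (ModuleCat k) ⟶ 𝟙_ (ModuleCat k)) (1 : k) := by
        rw [Functor.Monoidal.ε_η]
      rw [ConcreteCategory.comp_apply] at h0
      exact h0.trans rfl
    rw [h, map_zero] at h1
    exact one_ne_zero h1.symm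
  -- map composition applied
  have mapN : ∀ (M : 𝟙_ C ⟶ X), Z.map N₀ (vec Z M) = Z.map (M ≫ N₀) (unitVec Z) := by
    intro M
    rw [Functor.map_comp, ConcreteCategory.comp_apply]; rfl
  have mapN' : ∀ (M : 𝟙_ C ⟶ X), Z'.map N₀ (vec Z' M) = Z'.map (M ≫ N₀) (unitVec Z') := by
    intro M
    rw [Functor.map_comp, ConcreteCategory.comp_apply]; rfl
  obtain ⟨c₀, hc₀, hZ₀, hZ'₀⟩ := H2 (M₀ ≫ N₀)
  -- vec Z M₀ and vec Z' M₀ are nonzero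
  have hv₀ : vec Z M₀ ≠ 0 := by
    intro h
    have := mapN M₀
    rw [h, map_zero, hZ₀] at this
    exact smul_ne_zero hc₀ huZ this.symm
  have hw₀ : vec Z' M₀ ≠ 0 := by
    intro h
    have := mapN' M₀
    rw [h, map_zero, hZ'₀] at this
    exact smul_ne_zero hc₀ huZ' this.symm
  -- every vector is a multiple of vec Z M₀, resp. vec Z' M₀
  have spanZ : ∀ x : Z.obj X, ∃ a : k, a • vec Z M₀ = x :=
    fun x => exists_smul_eq_of_finrank_eq_one (H3 X).1 hv₀ x
  have spanZ' : ∀ x : Z'.obj X, ∃ a : k, a • vec Z' M₀ = x :=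
    fun x => exists_smul_eq_of_finrank_eq_one (H3 X).2 hw₀ x
  -- key: scalars transfer from Z to Z'
  have key : ∀ (M : 𝟙_ C ⟶ X) (a : k), vec Z M = a • vec Z M₀ → vec Z' M = a • vec Z' M₀ := by
    intro M a ha
    obtain ⟨cM, _, hZM, hZ'M⟩ := H2 (M ≫ N₀)
    have hcM : cM = a * c₀ := by
      have h1 : Z.map N₀ (vec Z M) = cM • unitVec Z := by rw [mapN M, hZM]
      have h2 : Z.map N₀ (vec Z M) = (a * c₀) • unitVec Z := by
        rw [ha, map_smul, mapN M₀, hZ₀, smul_smul]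
      have := h1.symm.trans h2
      have h3 : (cM - a * c₀) • unitVec Z = 0 := by
        rw [sub_smul, this, sub_self]
      rcases smul_eq_zero.mp h3 with h | h
      · exact sub_eq_zero.mp h
      · exact absurd h huZ
    obtain ⟨a', ha'⟩ := spanZ' (vec Z' M)
    have hcM' : cM = a' * c₀ := by
      have h1 : Z'.map N₀ (vec Z' M) = cM • unitVec Z' := by rw [mapN' M, hZ'M]
      have h2 : Z'.map N₀ (vec Z' M) = (a' * c₀) • unitVec Z' := by
        rw [← ha', map_smul, mapN' M₀, hZ'₀, smul_smul]
      have := h1.symm.trans h2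
      have h3 : (cM - a' * c₀) • unitVec Z' = 0 := by
        rw [sub_smul, this, sub_self]
      rcases smul_eq_zero.mp h3 with h | h
      · exact sub_eq_zero.mp h
      · exact absurd h huZ'
    have : a' = a := by
      apply mul_right_cancel₀ hc₀
      rw [← hcM', hcM]
    rw [← ha', this]
  -- construct F via a basis
  have hli : LinearIndependent k (fun _ : Unit => vec Z M₀) := linearIndependent_unique_iff.mpr hv₀
  have hsp : ⊤ ≤ Submodule.span k (Set.range fun _ : Unit => vec Z M₀) := by
    intro x _
    obtain ⟨a, ha⟩ := spanZ x
    rw [Set.range_const]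
    exact Submodule.mem_span_singleton.mpr ⟨a, ha⟩
  let b : Module.Basis Unit k (Z.obj X) := Module.Basis.mk hli hsp
  let F : Z.obj X →ₗ[k] Z'.obj X := b.constr k (fun _ => vec Z' M₀)
  have hFv₀ : F (vec Z M₀) = vec Z' M₀ := by
    have : b () = vec Z M₀ := Module.Basis.mk_apply hli hsp ()
    rw [← this]
    exact b.constr_basis k _ ()
  have hF : ∀ M : 𝟙_ C ⟶ X, F (vec Z M) = vec Z' M := by
    intro M
    obtain ⟨a, ha⟩ := spanZ (vec Z M)
    rw [← ha, map_smul, hFv₀, (key M a ha.symm).symm]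
  refine ⟨⟨F, hF, ?_⟩, ?_⟩
  · -- uniqueness
    intro G hG
    apply LinearMap.ext
    intro x
    obtain ⟨a, ha⟩ := spanZ x
    rw [← ha, map_smul, map_smul, hG M₀, hF M₀]
  · -- bijectivity
    intro G hG
    constructor
    · intro x y hxy
      obtain ⟨a, ha⟩ := spanZ x
      obtain ⟨c, hc⟩ := spanZ y
      rw [← ha, ← hc, map_smul, map_smul, hG M₀] at hxy
      have h3 : (a - c) • vec Z' M₀ = 0 := by rw [sub_smul, hxy, sub_self]
      rcases smul_eq_zero.mp h3 with h | h
      · rw [← ha, ← hc, sub_eq_zero.mp h]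
      · exact absurd h hw₀
    · intro y
      obtain ⟨a, ha⟩ := spanZ' y
      exact ⟨a • vec Z M₀, by rw [map_smul, hG M₀, ha]⟩
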